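/- Let a₁ < a₂ < … < a_N be real numbers (N ≥ 1) and let A = {a₁, …, a_N} with the metric d(x,y) = |x − y|. Then the vector w ∈ ℝ^A given by w_{a_i} = (1/2)(tanh((a_i − a_{i−1})/2) + tanh((a_{i+1} − a_i)/2)) for 2 ≤ i ≤ N−1, w_{a_1} = (1/2)(1 + tanh((a_2 − a_1)/2)), and w_{a_N} = (1/2)(1 + tanh((a_N − a_{N−1})/2)), is a weighting on A, and the magnitude of A equals 1 + ∑_{i=2}^{N} tanh((a_i − a_{i−1})/2). -/

import Mathlib

open Matrix BigOperators

private lemma tanh_key (d : ℝ) :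
    Real.tanh (d/2) + Real.exp (-d) * (1 + Real.tanh (d/2)) = 1 := by
  rw [Real.tanh_eq_sinh_div_cosh, Real.sinh_eq, Real.cosh_eq]
  have h1 : Real.exp (d/2) + Real.exp (-(d/2)) ≠ 0 := by positivity
  have h2 : Real.exp (-d) = Real.exp (-d/2) * Real.exp (-d/2) := by
    rw [← Real.exp_add]; ring_nf
  have h3 : Real.exp (d/2) * Real.exp (-d/2) = 1 := by
    rw [← Real.exp_add]; ring_nf; exact Real.exp_zero
  have h4 : Real.exp (-(d/2)) = Real.exp (-d/2) := by congr 1; ring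
  field_simp
  linear_combination (Real.exp (d/2) + Real.exp (d/2)) * h2 + 2 * Real.exp (-d/2) * h3 - 2 * h4

private noncomputable def Lf (a : ℕ → ℝ) (i : ℕ) : ℝ :=
  if i = 0 then 1 else Real.tanh ((a i - a (i-1))/2)

private noncomputable def Rf (N : ℕ) (a : ℕ → ℝ) (i : ℕ) : ℝ :=
  if i = N - 1 then 1 else Real.tanh ((a (i+1) - a i)/2)

private noncomputable def wfun (N : ℕ) (a : ℕ → ℝ) (i : ℕ) : ℝ :=
  (1/2) * (Lf a i + Rf N a i)

private lemma U_lemma (N : ℕ) (a : ℕ → ℝ) :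
    ∀ j, j < N →
    ∑ i ∈ Finset.range (j+1), Real.exp (a i - a j) * wfun N a i
      = (1/2) * (1 + Rf N a j) := by
  intro j
  induction j with
  | zero =>
    intro _
    simp [wfun, Lf]
  | succ j ih =>
    intro hj
    have hj' : j < N := by omega
    have hjne : j ≠ N - 1 := by omega
    have step : ∑ i ∈ Finset.range (j+1), Real.exp (a i - a (j+1)) * wfun N a i
        = Real.exp (-(a (j+1) - a j)) *
            ∑ i ∈ Finset.range (j+1), Real.exp (a i - a j) * wfun N a i := by
      rw [Finset.mul_sum]
      apply Finset.sum_congr rfl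
      intro i _
      rw [← mul_assoc, ← Real.exp_add]
      congr 2
      ring
    rw [Finset.sum_range_succ, step, ih hj', sub_self, Real.exp_zero, one_mul]
    have hw1 : wfun N a (j+1)
        = (1/2) * (Real.tanh ((a (j+1) - a j)/2) + Rf N a (j+1)) := by
      simp [wfun, Lf]
    rw [hw1]
    have hR : Rf N a j = Real.tanh ((a (j+1) - a j)/2) := by
      simp [Rf, hjne]
    rw [hR]
    linear_combination (1/2) * tanh_key (a (j+1) - a j)

private lemma V_lemma (N : ℕ) (a : ℕ → ℝ) :
    ∀ m j, j < N → N - j = m →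
    ∑ i ∈ Finset.Ico j N, Real.exp (a j - a i) * wfun N a i
      = (1/2) * (1 + Lf a j) := by
  intro m
  induction m with
  | zero => intro j hj hm; omega
  | succ m ih =>
    intro j hj hm
    by_cases hlast : j + 1 = N
    · have hIco : Finset.Ico j N = {j} := by
        rw [← hlast, Finset.Ico_add_one_right_eq_Icc, Finset.Icc_self]
      have hjN1 : j = N - 1 := by omega
      rw [hIco, Finset.sum_singleton, sub_self, Real.exp_zero, one_mul]
      have : Rf N a j = 1 := by simp [Rf, hjN1]
      simp [wfun, this]
      ring
    · have hlt : j + 1 < N := by omega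
      rw [Finset.sum_eq_sum_Ico_succ_bot hj]
      have step : ∑ i ∈ Finset.Ico (j+1) N, Real.exp (a j - a i) * wfun N a i
          = Real.exp (-(a (j+1) - a j)) *
              ∑ i ∈ Finset.Ico (j+1) N, Real.exp (a (j+1) - a i) * wfun N a i := by
        rw [Finset.mul_sum]
        apply Finset.sum_congr rfl
        intro i _
        rw [← mul_assoc, ← Real.exp_add]
        congr 2
        ring
      rw [step, ih (j+1) hlt (by omega), sub_self, Real.exp_zero, one_mul]
      have hL1 : Lf a (j+1) = Real.tanh ((a (j+1) - a j)/2) := by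
        simp [Lf]
      rw [hL1]
      have hw1 : wfun N a j = (1/2) * (Lf a j + Real.tanh ((a (j+1) - a j)/2)) := by
        have : Rf N a j = Real.tanh ((a (j+1) - a j)/2) := by
          simp [Rf, show j ≠ N - 1 by omega]
        simp [wfun, this]
      rw [hw1]
      linear_combination (1/2) * tanh_key (a (j+1) - a j)

/-- For real numbers `a 0 < a 1 < ⋯ < a (N-1)` (`N ≥ 1`), viewed as a
finite subspace of `ℝ`, the explicit vector `w` built from hyperbolic tangents of
half-gaps is a weighting (`Z w = 𝟙` for the similarity matrix
`Z i j = exp (-|a i - a j|)`), and the magnitude equals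
`1 + ∑_{i=2}^{N} tanh ((a_i - a_{i-1})/2)`. -/
theorem stmt_11 (N : ℕ) (hN : 1 ≤ N) (a : ℕ → ℝ)
    (ha : ∀ i j : ℕ, i < j → j < N → a i < a j)
    (w : Fin N → ℝ)
    (hw : w = fun i : Fin N =>
      (1 / 2) *
        ((if (i : ℕ) = 0 then 1 else Real.tanh ((a i - a ((i : ℕ) - 1)) / 2)) +
         (if (i : ℕ) = N - 1 then 1 else Real.tanh ((a ((i : ℕ) + 1) - a i) / 2)))) :
    ((Matrix.of fun i j : Fin N => Real.exp (-|a i - a j|)).mulVec w = fun _ => 1) ∧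
    (∑ i : Fin N, w i =
      1 + ∑ i : Fin N,
        if (i : ℕ) = 0 then 0 else Real.tanh ((a i - a ((i : ℕ) - 1)) / 2)) := by
  have hwf : ∀ x : Fin N, w x = wfun N a ↑x := by
    intro x; rw [hw]; simp [wfun, Lf, Rf]
  have mono : ∀ p q : ℕ, p ≤ q → q < N → a p ≤ a q := by
    intro p q hpq hq
    rcases eq_or_lt_of_le hpq with rfl | h
    · exact le_refl _
    · exact (ha p q h hq).le
  constructor
  · funext j
    have hjN : (j : ℕ) < N := j.isLt
    show ∑ x : Fin N, Real.exp (-|a ↑j - a ↑x|) * w x = 1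
    have hcast : ∑ x : Fin N, Real.exp (-|a ↑j - a ↑x|) * w x
        = ∑ i ∈ Finset.range N, Real.exp (-|a ↑j - a i|) * wfun N a i := by
      rw [← Fin.sum_univ_eq_sum_range (fun i => Real.exp (-|a ↑j - a i|) * wfun N a i) N]
      exact Finset.sum_congr rfl (fun x _ => by rw [hwf x])
    rw [hcast]
    have hsplit : ∑ i ∈ Finset.range N, Real.exp (-|a ↑j - a i|) * wfun N a i
        = (∑ i ∈ Finset.range ((j:ℕ)+1), Real.exp (-|a ↑j - a i|) * wfun N a i)
          + ∑ i ∈ Finset.Ico ((j:ℕ)+1) N, Real.exp (-|a ↑j - a i|) * wfun N a i := by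
      rw [Finset.range_eq_Ico, Finset.range_eq_Ico]
      exact (Finset.sum_Ico_consecutive (fun i => Real.exp (-|a ↑j - a i|) * wfun N a i) (Nat.zero_le _) (by omega : (j:ℕ)+1 ≤ N)).symm
    rw [hsplit]
    have h1 : ∑ i ∈ Finset.range ((j:ℕ)+1), Real.exp (-|a ↑j - a i|) * wfun N a i
        = ∑ i ∈ Finset.range ((j:ℕ)+1), Real.exp (a i - a ↑j) * wfun N a i := by
      apply Finset.sum_congr rfl
      intro i hi
      have hile : i ≤ (j:ℕ) := by
        have := Finset.mem_range.mp hi; omega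
      rw [abs_of_nonneg (sub_nonneg.2 (mono i ↑j hile hjN)), neg_sub]
    have h2 : ∑ i ∈ Finset.Ico ((j:ℕ)+1) N, Real.exp (-|a ↑j - a i|) * wfun N a i
        = ∑ i ∈ Finset.Ico ((j:ℕ)+1) N, Real.exp (a ↑j - a i) * wfun N a i := by
      apply Finset.sum_congr rfl
      intro i hi
      obtain ⟨hi1, hi2⟩ := Finset.mem_Ico.mp hi
      rw [abs_of_nonpos (sub_nonpos.2 (mono ↑j i (by omega) hi2)), neg_neg]
    rw [h1, h2, U_lemma N a ↑j hjN]
    have hV := V_lemma N a (N - ↑j) ↑j hjN rfl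
    rw [Finset.sum_eq_sum_Ico_succ_bot hjN, sub_self, Real.exp_zero, one_mul] at hV
    have h3 : ∑ i ∈ Finset.Ico ((j:ℕ)+1) N, Real.exp (a ↑j - a i) * wfun N a i
        = (1/2) * (1 + Lf a ↑j) - wfun N a ↑j := by linarith
    rw [h3, wfun]
    ring
  · obtain ⟨M, rfl⟩ : ∃ M, N = M + 1 := ⟨N - 1, (Nat.succ_pred_eq_of_pos hN).symm⟩
    have hL : ∑ x : Fin (M+1), w x = ∑ i ∈ Finset.range (M+1), wfun (M+1) a i := by
      rw [← Fin.sum_univ_eq_sum_range (fun i => wfun (M+1) a i) (M+1)]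
      exact Finset.sum_congr rfl (fun x _ => hwf x)
    have hR : (∑ i : Fin (M+1),
        if (i : ℕ) = 0 then 0 else Real.tanh ((a i - a ((i : ℕ) - 1)) / 2))
        = ∑ i ∈ Finset.range (M+1),
            (if i = 0 then 0 else Real.tanh ((a i - a (i - 1)) / 2)) := by
      exact Fin.sum_univ_eq_sum_range
        (fun i => if i = 0 then (0:ℝ) else Real.tanh ((a i - a (i - 1)) / 2)) (M+1)
    rw [hL, hR]
    have hsplitw : ∑ i ∈ Finset.range (M+1), wfun (M+1) a i
        = (1/2) * ((∑ i ∈ Finset.range (M+1), Lf a i)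
            + (∑ i ∈ Finset.range (M+1), Rf (M+1) a i)) := by
      rw [← Finset.sum_add_distrib, Finset.mul_sum]
      rfl
    have hLsum : ∑ i ∈ Finset.range (M+1), Lf a i
        = 1 + ∑ i ∈ Finset.range M, Real.tanh ((a (i+1) - a i)/2) := by
      rw [Finset.sum_range_succ']
      have : ∀ i, Lf a (i+1) = Real.tanh ((a (i+1) - a i)/2) := by
        intro i; simp [Lf]
      simp only [this]
      simp [Lf, add_comm]
    have hRsum : ∑ i ∈ Finset.range (M+1), Rf (M+1) a i
        = 1 + ∑ i ∈ Finset.range M, Real.tanh ((a (i+1) - a i)/2) := by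
      rw [Finset.sum_range_succ]
      have hM : Rf (M+1) a M = 1 := by simp [Rf]
      rw [hM]
      have : ∀ i ∈ Finset.range M, Rf (M+1) a i = Real.tanh ((a (i+1) - a i)/2) := by
        intro i hi
        have := Finset.mem_range.mp hi
        unfold Rf
        rw [if_neg (by omega : ¬ i = M+1-1)]
      rw [Finset.sum_congr rfl this]
      ring
    have hTsum : (∑ i ∈ Finset.range (M+1),
          (if i = 0 then 0 else Real.tanh ((a i - a (i - 1)) / 2)))
        = ∑ i ∈ Finset.range M, Real.tanh ((a (i+1) - a i)/2) := by
      rw [Finset.sum_range_succ']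
      simp
    rw [hsplitw, hLsum, hRsum, hTsum]
    ring
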